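/- The Khinchin constant satisfies 2 < K_0 < 3, where K_0 = ∏_{m=1}^∞ (1 + 1/(m(m+2)))^{log_2 m}. -/

import Mathlib

set_option maxRecDepth 100000
set_option maxHeartbeats 1000000

open Real Finset Filter

private def plL : List Nat := [0, 0, 16, 25, 32, 37, 41, 44, 48, 50, 53, 55, 57, 59, 60, 62, 64, 65, 66, 67, 69, 70, 71, 72, 73, 74, 75, 76, 76, 77, 78, 79, 80, 80, 81, 82, 82, 83, 83, 84, 85]

private def puL : List Nat := [0, 0, 16, 26, 32, 38, 42, 45, 48, 51, 54, 56, 58, 60, 61, 63, 64, 66, 67, 68, 70, 71, 72, 73, 74, 75, 76, 77, 77, 78, 79, 80, 80, 81, 82, 83, 83, 84, 84, 85, 86, 86, 87, 87, 88, 88, 89, 89, 90, 90, 91, 91, 92, 92, 93, 93, 93, 94, 94, 95, 95, 95, 96, 96, 96, 97, 97, 98, 98, 98, 99, 99, 99, 100, 100, 100, 100, 101, 101, 101, 102, 102, 102, 103, 103, 103, 103, 104, 104, 104, 104, 105, 105, 105, 105, 106, 106, 106, 106, 107, 107, 107, 107, 107, 108, 108, 108, 108, 109, 109, 109, 109, 109,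 110, 110, 110, 110, 110, 111, 111, 111, 111, 111, 112, 112, 112, 112, 112, 112, 113, 113, 113, 113, 113, 114, 114, 114, 114, 114, 114, 115, 115, 115, 115, 115, 115, 116, 116, 116, 116, 116, 116, 116, 117, 117, 117, 117, 117, 117, 118, 118, 118, 118, 118, 118, 118, 119, 119, 119, 119, 119, 119, 119, 119, 120, 120, 120, 120, 120, 120, 120, 120, 121, 121, 121, 121, 121, 121, 121, 121, 122, 122, 122, 122, 122, 122, 122, 122, 123, 123, 123, 123, 123, 123, 123, 123, 123, 124, 124, 124, 124, 124, 124, 124, 124, 124, 125, 125, 125, 125, 125, 125, 125, 125, 125, 126, 126, 126, 126, 126, 126, 126, 126, 126, 126, 127, 127, 127, 127, 127, 127, 127, 127, 127, 127, 127, 128, 128, 128, 128, 128, 128, 128, 128, 128, 128, 128, 129, 129, 129, 129, 129, 129, 129, 129, 129, 129, 129, 130, 130, 130, 130, 130, 130, 130, 130, 130, 130, 130, 130, 131, 131, 131, 131, 131, 131, 131, 131, 131, 131, 131, 131, 132, 132, 132, 132, 132, 132, 132, 132, 132]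

private def peL (m : Nat) : Nat := plL.getD m 0
private def peU (m : Nat) : Nat := puL.getD m 0

/-- the log of the `m`-th factor of the Khinchin product, reindexed over `ℕ` (`m = n+1`). -/
private noncomputable def bfun (n : ℕ) : ℝ :=
  Real.log (1 + 1 / (((n:ℝ)+1) * (((n:ℝ)+1) + 2))) * Real.logb 2 ((n:ℝ)+1)

private lemma bfun_nonneg (n : ℕ) : 0 ≤ bfun n := by
  apply mul_nonneg
  · have hx : (0:ℝ) < 1 / (((n:ℝ)+1) * (((n:ℝ)+1) + 2)) := by positivity
    exact Real.log_nonneg (by linarith)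
  · apply Real.logb_nonneg (by norm_num)
    have : (0:ℝ) ≤ (n:ℝ) := Nat.cast_nonneg n
    linarith

private lemma log2_inv : (Real.log 2)⁻¹ ≤ 14427/10000 := by
  rw [inv_le_comm₀ (by linarith [Real.log_two_gt_d9]) (by norm_num)]
  nlinarith [Real.log_two_gt_d9]

private lemma bfun_le (n : ℕ) :
    bfun n ≤ (8 * (14427/10000)) * ((n:ℝ)+1) ^ (-(15/8) : ℝ) := by
  set m : ℝ := (n:ℝ)+1 with hm
  have hm1 : (1:ℝ) ≤ m := by simp [hm]
  have hm0 : (0:ℝ) < m := by linarith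
  set x : ℝ := 1 / (m * (m + 2)) with hx
  have hx0 : 0 < x := by positivity
  have h1 : Real.log (1 + x) ≤ x := by
    have := Real.log_le_sub_one_of_pos (show (0:ℝ) < 1 + x by linarith)
    linarith
  have h2 : x ≤ m ^ (-(2:ℝ)) := by
    rw [Real.rpow_neg hm0.le, hx]
    rw [show ((2:ℝ)) = ((2:ℕ):ℝ) by norm_num, Real.rpow_natCast]
    rw [one_div]
    apply inv_anti₀ (by positivity)
    nlinarith
  have h3 : Real.log m ≤ 8 * m ^ ((1:ℝ)/8) := by
    have hl : Real.log (m ^ ((1:ℝ)/8)) = (1/8) * Real.log m := Real.log_rpow hm0 _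
    have hb : Real.log (m ^ ((1:ℝ)/8)) ≤ m ^ ((1:ℝ)/8) - 1 :=
      Real.log_le_sub_one_of_pos (Real.rpow_pos_of_pos hm0 _)
    nlinarith [Real.rpow_pos_of_pos hm0 ((1:ℝ)/8)]
  have hlogb : Real.logb 2 m ≤ (14427/10000) * Real.log m := by
    rw [Real.logb, div_eq_mul_inv]
    have hlm : 0 ≤ Real.log m := Real.log_nonneg hm1
    have := mul_le_mul_of_nonneg_left log2_inv hlm
    linarith
  have hlogb0 : 0 ≤ Real.logb 2 m := Real.logb_nonneg (by norm_num) hm1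
  have key : Real.log (1 + x) * Real.logb 2 m
      ≤ m ^ (-(2:ℝ)) * ((14427/10000) * (8 * m ^ ((1:ℝ)/8))) := by
    have s1 : Real.log (1 + x) * Real.logb 2 m ≤ x * ((14427/10000) * Real.log m) :=
      mul_le_mul h1 hlogb hlogb0 hx0.le
    have s2 : x * ((14427/10000) * Real.log m)
        ≤ m ^ (-(2:ℝ)) * ((14427/10000) * (8 * m ^ ((1:ℝ)/8))) := by
      apply mul_le_mul h2 (by nlinarith) (mul_nonneg (by norm_num) (Real.log_nonneg hm1)) (by positivity)
    linarith
  have hrw : m ^ (-(2:ℝ)) * ((14427/10000) * (8 * m ^ ((1:ℝ)/8)))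
      = (8 * (14427/10000)) * m ^ (-(15/8):ℝ) := by
    rw [show (-(15/8):ℝ) = -2 + 1/8 by norm_num, Real.rpow_add hm0]
    ring
  calc bfun n = Real.log (1 + x) * Real.logb 2 m := rfl
    _ ≤ _ := key
    _ = _ := hrw

private lemma summable_rpow_shift : Summable (fun n : ℕ => ((n:ℝ)+1) ^ (-(15/8) : ℝ)) := by
  have h := (Real.summable_nat_rpow (p := -(15/8))).mpr (by norm_num)
  have h2 := (summable_nat_add_iff (f := fun n : ℕ => (n:ℝ) ^ (-(15/8):ℝ)) 1).mpr h
  refine h2.congr fun n => ?_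
  push_cast
  ring_nf

private lemma summable_bfun : Summable bfun :=
  Summable.of_nonneg_of_le bfun_nonneg bfun_le (summable_rpow_shift.mul_left _)

private lemma tele (k : ℕ) (hk : 300 ≤ k) :
    (((k:ℝ)+1)) ^ (-(15/8):ℝ) ≤ (8/7) * ((k:ℝ) ^ (-(7/8):ℝ) - ((k:ℝ)+1) ^ (-(7/8):ℝ)) := by
  set K : ℝ := (k:ℝ) with hK
  have hK0 : (0:ℝ) < K := by
    have : (300:ℝ) ≤ K := by rw [hK]; exact_mod_cast hk
    linarith
  have hK10 : (0:ℝ) < K + 1 := by linarith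
  have hinv : (0:ℝ) < 1/K := by positivity
  have hbern : 1 + (15/8 : ℝ) * (1/K) ≤ (1 + 1/K) ^ ((15/8):ℝ) :=
    one_add_mul_self_le_rpow_one_add (by linarith) (by norm_num)
  have hrw1 : (1 + 1/K) ^ ((15/8):ℝ) = (K+1) ^ ((15/8):ℝ) * K ^ (-(15/8):ℝ) := by
    have : (1 + 1/K) = (K+1)/K := by field_simp
    rw [this, Real.div_rpow (by linarith) hK0.le, Real.rpow_neg hK0.le, div_eq_mul_inv]
  have hmul : K + 15/8 ≤ (K+1) ^ ((15/8):ℝ) * K ^ (-(7/8):ℝ) := by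
    have h := mul_le_mul_of_nonneg_left (hbern.trans_eq hrw1) hK0.le
    have e1 : K * (1 + (15/8:ℝ) * (1/K)) = K + 15/8 := by field_simp
    have e2 : K * ((K+1) ^ ((15/8):ℝ) * K ^ (-(15/8):ℝ))
        = (K+1) ^ ((15/8):ℝ) * K ^ (-(7/8):ℝ) := by
      rw [show (-(7/8):ℝ) = 1 + -(15/8) by norm_num, Real.rpow_add hK0, Real.rpow_one]
      ring
    rw [e1] at h
    rw [← e2]
    linarith [h]
  have hpos : (0:ℝ) < (K+1) ^ (-(15/8):ℝ) := Real.rpow_pos_of_pos hK10 _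
  have hstep : (7/8 : ℝ) ≤ (K+1) ^ ((15/8):ℝ) * K ^ (-(7/8):ℝ) - (K+1) := by linarith
  have h := mul_le_mul_of_nonneg_left hstep hpos.le
  have e3 : (K+1) ^ (-(15/8):ℝ) * ((K+1) ^ ((15/8):ℝ) * K ^ (-(7/8):ℝ) - (K+1)) =
      K ^ (-(7/8):ℝ) - (K+1) ^ (-(7/8):ℝ) := by
    have c1 : (K+1) ^ (-(15/8):ℝ) * (K+1) ^ ((15/8):ℝ) = 1 := by
      rw [← Real.rpow_add hK10]; norm_num
    have c2 : (K+1) ^ (-(15/8):ℝ) * (K+1) = (K+1) ^ (-(7/8):ℝ) := by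
      nth_rewrite 2 [show (K+1) = (K+1) ^ (1:ℝ) by rw [Real.rpow_one]]
      rw [← Real.rpow_add hK10]; norm_num
    calc (K+1) ^ (-(15/8):ℝ) * ((K+1) ^ ((15/8):ℝ) * K ^ (-(7/8):ℝ) - (K+1))
        = ((K+1) ^ (-(15/8):ℝ) * (K+1) ^ ((15/8):ℝ)) * K ^ (-(7/8):ℝ)
          - (K+1) ^ (-(15/8):ℝ) * (K+1) := by ring
      _ = K ^ (-(7/8):ℝ) - (K+1) ^ (-(7/8):ℝ) := by rw [c1, c2]; ring
  rw [e3] at h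
  linarith [h]

private lemma rpow300 : ((300:ℝ)) ^ (-(7/8):ℝ) ≤ 69/10000 := by
  rw [Real.rpow_neg (by norm_num)]
  rw [inv_le_comm₀ (by positivity) (by norm_num)]
  have h8 : ((10000/69 : ℝ)) ^ (8:ℕ) ≤ ((300:ℝ) ^ ((7:ℝ)/8)) ^ (8:ℕ) := by
    rw [← Real.rpow_natCast ((300:ℝ) ^ ((7:ℝ)/8)) 8, ← Real.rpow_mul (by norm_num)]
    have : ((7:ℝ)/8) * (8:ℕ) = ((7:ℕ):ℝ) := by norm_num
    rw [this, Real.rpow_natCast]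
    norm_num
  have := le_of_pow_le_pow_left₀ (by norm_num) (by positivity) h8
  calc (69/10000 : ℝ)⁻¹ = 10000/69 := by norm_num
    _ ≤ (300:ℝ) ^ ((7:ℝ)/8) := this
    _ = (300:ℝ) ^ (7/8:ℝ) := by norm_num

private lemma tail_bound :
    (∑' n : ℕ, bfun (n + 300)) ≤ (8 * (14427/10000)) * ((8/7) * (69/10000)) := by
  apply Real.tsum_le_of_sum_range_le (fun n => bfun_nonneg _)
  intro n
  have hstep : ∀ i : ℕ, bfun (i + 300) ≤
      (8 * (14427/10000)) * ((8/7) * ((((i:ℝ)+300)) ^ (-(7/8):ℝ) - (((i:ℝ)+300)+1) ^ (-(7/8):ℝ))) := by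
    intro i
    have h1 := bfun_le (i + 300)
    have hc : (((i + 300 : ℕ)):ℝ) = (i:ℝ) + 300 := by push_cast; ring
    rw [hc] at h1
    have h2 := tele (i + 300) (by omega)
    rw [hc] at h2
    have h2' : ((i:ℝ) + 300 + 1) ^ (-(15/8):ℝ) ≤
        (8/7) * (((i:ℝ)+300) ^ (-(7/8):ℝ) - ((i:ℝ)+300+1) ^ (-(7/8):ℝ)) := h2
    calc bfun (i + 300) ≤ (8 * (14427/10000)) * ((i:ℝ) + 300 + 1) ^ (-(15/8) : ℝ) := h1
      _ ≤ _ := by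
          apply mul_le_mul_of_nonneg_left h2' (by norm_num)
  calc ∑ i ∈ range n, bfun (i + 300)
      ≤ ∑ i ∈ range n, (8 * (14427/10000)) * ((8/7) * ((((i:ℝ)+300)) ^ (-(7/8):ℝ) - (((i:ℝ)+300)+1) ^ (-(7/8):ℝ))) :=
        Finset.sum_le_sum fun i _ => hstep i
    _ = (8 * (14427/10000)) * (8/7) * ∑ i ∈ range n, ((((i:ℝ)+300)) ^ (-(7/8):ℝ) - (((i:ℝ)+300)+1) ^ (-(7/8):ℝ)) := by
        rw [Finset.mul_sum]; apply Finset.sum_congr rfl; intros; ring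
    _ = (8 * (14427/10000)) * (8/7) * (((300:ℝ)) ^ (-(7/8):ℝ) - (((n:ℝ)+300)) ^ (-(7/8):ℝ)) := by
        congr 1
        have := Finset.sum_range_sub' (f := fun i : ℕ => (((i:ℝ)+300)) ^ (-(7/8):ℝ)) n
        rw [show ((300:ℝ)) ^ (-(7/8):ℝ) = (((0:ℕ):ℝ)+300) ^ (-(7/8):ℝ) by norm_num, ← this]
        apply Finset.sum_congr rfl
        intro i _
        push_cast
        ring_nf
    _ ≤ (8 * (14427/10000)) * ((8/7) * (69/10000)) := by
        have h0 : (0:ℝ) ≤ ((n:ℝ)+300) ^ (-(7/8):ℝ) := by positivity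
        nlinarith [rpow300]

private lemma logb_le_of_nat (i p : ℕ) (h : (i+1)^16 ≤ 2^p) :
    Real.logb 2 ((i:ℝ)+1) ≤ (p:ℝ)/16 := by
  rw [Real.logb, div_le_div_iff₀ (Real.log_pos (by norm_num)) (by norm_num)]
  have hcast : ((i:ℝ)+1)^(16:ℕ) ≤ (2:ℝ)^(p:ℕ) := by exact_mod_cast h
  have hlog := Real.log_le_log (by positivity) hcast
  rw [Real.log_pow, Real.log_pow] at hlog
  push_cast at hlog ⊢
  linarith

private lemma le_logb_of_nat (i p : ℕ) (h : 2^p ≤ (i+1)^16) :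
    (p:ℝ)/16 ≤ Real.logb 2 ((i:ℝ)+1) := by
  rw [Real.logb, div_le_div_iff₀ (by norm_num) (Real.log_pos (by norm_num))]
  have hcast : (2:ℝ)^(p:ℕ) ≤ ((i:ℝ)+1)^(16:ℕ) := by exact_mod_cast h
  have hlog := Real.log_le_log (by positivity) hcast
  rw [Real.log_pow, Real.log_pow] at hlog
  push_cast at hlog ⊢
  linarith

private lemma sum_log_eq (N : ℕ) (pe : ℕ → ℕ) :
    ∑ i ∈ range N, ((pe (i+1) : ℝ) * Real.log (1 + 1/(((i:ℝ)+1) * (((i:ℝ)+1)+2))))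
      = Real.log (((∏ i ∈ range N, ((i+2)^2)^(pe (i+1)) : ℕ) : ℝ)
          / ((∏ i ∈ range N, ((i+1)*(i+3))^(pe (i+1)) : ℕ) : ℝ)) := by
  have hy : ∀ i : ℕ, (1 : ℝ) + 1/(((i:ℝ)+1) * (((i:ℝ)+1)+2)) = (((i:ℝ)+2)^2) / (((i:ℝ)+1) * ((i:ℝ)+3)) := by
    intro i
    have h1 : ((i:ℝ)+1) ≠ 0 := by positivity
    have h3 : ((i:ℝ)+3) ≠ 0 := by positivity
    field_simp
    ring
  have step1 : ∀ i ∈ range N, ((pe (i+1) : ℝ) * Real.log (1 + 1/(((i:ℝ)+1) * (((i:ℝ)+1)+2))))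
      = Real.log ((1 + 1/(((i:ℝ)+1) * (((i:ℝ)+1)+2))) ^ (pe (i+1))) := by
    intro i _
    rw [Real.log_pow]
  rw [Finset.sum_congr rfl step1, ← Real.log_prod]
  · congr 1
    rw [Finset.prod_congr rfl (fun i _ => by rw [hy i])]
    rw [Finset.prod_congr rfl (fun i _ => div_pow _ _ _), Finset.prod_div_distrib]
    push_cast
    ring
  · intro i _
    have : (0:ℝ) < 1 + 1/(((i:ℝ)+1) * (((i:ℝ)+1)+2)) := by positivity
    positivity

private lemma nat_low : ∀ m < 40, 2^(peL (m+1)) ≤ (m+1)^16 := by decide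
private lemma nat_up : ∀ m < 300, (m+1)^16 ≤ 2^(peU (m+1)) := by decide

private lemma nat_prod_low :
    2^16 * (∏ i ∈ Finset.range 40, (((i+1)*(i+3))^(peL (i+1)))) <
      ∏ i ∈ Finset.range 40, (((i+2)^2)^(peL (i+1))) := by decide

private lemma nat_prod_up :
    (∏ i ∈ Finset.range 300, (((i+2)^2)^(peU (i+1)))) * 10^16 <
      3^16 * 9^16 * ∏ i ∈ Finset.range 300, (((i+1)*(i+3))^(peU (i+1))) := by decide

private lemma S_lower : Real.log 2 < ∑' n : ℕ, bfun n := by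
  have hBl : 0 < (∏ i ∈ Finset.range 40, (((i+1)*(i+3))^(peL (i+1)))) :=
    Finset.prod_pos fun i _ => pow_pos (by positivity) _
  have hpart : ∑ i ∈ range 40, bfun i ≤ ∑' n : ℕ, bfun n :=
    Summable.sum_le_tsum (range 40) (fun i _ => bfun_nonneg i) summable_bfun
  have hterm : ∀ i ∈ range 40,
      (1/16 : ℝ) * ((peL (i+1) : ℝ) * Real.log (1 + 1/(((i:ℝ)+1) * (((i:ℝ)+1)+2)))) ≤ bfun i := by
    intro i hi
    have hi40 : i < 40 := by simpa using hi
    have hlogb := le_logb_of_nat i (peL (i+1)) (nat_low i hi40)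
    have hly : 0 ≤ Real.log (1 + 1/(((i:ℝ)+1) * (((i:ℝ)+1)+2))) := by
      have : (0:ℝ) < 1/(((i:ℝ)+1) * (((i:ℝ)+1)+2)) := by positivity
      exact Real.log_nonneg (by linarith)
    have := mul_le_mul_of_nonneg_left hlogb hly
    unfold bfun
    nlinarith [this]
  have hsum2 : (1/16 : ℝ) * ∑ i ∈ range 40, ((peL (i+1) : ℝ) * Real.log (1 + 1/(((i:ℝ)+1) * (((i:ℝ)+1)+2))))
      ≤ ∑ i ∈ range 40, bfun i := by
    rw [Finset.mul_sum]
    exact Finset.sum_le_sum hterm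
  have hlogeq := sum_log_eq 40 peL
  rw [hlogeq] at hsum2
  have hABpos : (0:ℝ) < ((∏ i ∈ Finset.range 40, ((i+2)^2)^(peL (i+1)) : ℕ) : ℝ)
      / ((∏ i ∈ Finset.range 40, ((i+1)*(i+3))^(peL (i+1)) : ℕ) : ℝ) := by
    have hA : 0 < (∏ i ∈ Finset.range 40, ((i+2)^2)^(peL (i+1))) :=
      Finset.prod_pos fun i _ => pow_pos (by positivity) _
    apply div_pos
    · exact_mod_cast hA
    · exact_mod_cast hBl
  have hgt : ((2:ℝ))^(16:ℕ) < ((∏ i ∈ Finset.range 40, ((i+2)^2)^(peL (i+1)) : ℕ) : ℝ)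
      / ((∏ i ∈ Finset.range 40, ((i+1)*(i+3))^(peL (i+1)) : ℕ) : ℝ) := by
    rw [lt_div_iff₀ (by exact_mod_cast hBl)]
    exact_mod_cast nat_prod_low
  have hloggt := Real.log_lt_log (by positivity) hgt
  rw [Real.log_pow] at hloggt
  have : Real.log 2 < (1/16 : ℝ) * Real.log (((∏ i ∈ Finset.range 40, ((i+2)^2)^(peL (i+1)) : ℕ) : ℝ)
      / ((∏ i ∈ Finset.range 40, ((i+1)*(i+3))^(peL (i+1)) : ℕ) : ℝ)) := by
    rw [show ((16:ℕ):ℝ) = (16:ℝ) from by norm_num] at hloggt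
    linarith
  linarith

private lemma S_upper : (∑' n : ℕ, bfun n) < Real.log 3 := by
  have hBu : 0 < (∏ i ∈ Finset.range 300, (((i+1)*(i+3))^(peU (i+1)))) :=
    Finset.prod_pos fun i _ => pow_pos (by positivity) _
  have hAu : 0 < (∏ i ∈ Finset.range 300, (((i+2)^2)^(peU (i+1)))) :=
    Finset.prod_pos fun i _ => pow_pos (by positivity) _
  have hsplit := summable_bfun.sum_add_tsum_nat_add 300
  -- hsplit : ∑ i in range 300, bfun i + ∑' n, bfun (n+300) = ∑' n, bfun n
  have hterm : ∀ i ∈ range 300,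
      bfun i ≤ (1/16 : ℝ) * ((peU (i+1) : ℝ) * Real.log (1 + 1/(((i:ℝ)+1) * (((i:ℝ)+1)+2)))) := by
    intro i hi
    have hi300 : i < 300 := by simpa using hi
    have hlogb := logb_le_of_nat i (peU (i+1)) (nat_up i hi300)
    have hly : 0 ≤ Real.log (1 + 1/(((i:ℝ)+1) * (((i:ℝ)+1)+2))) := by
      have : (0:ℝ) < 1/(((i:ℝ)+1) * (((i:ℝ)+1)+2)) := by positivity
      exact Real.log_nonneg (by linarith)
    have := mul_le_mul_of_nonneg_left hlogb hly
    unfold bfun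
    nlinarith [this]
  have hsum2 : ∑ i ∈ range 300, bfun i
      ≤ (1/16 : ℝ) * ∑ i ∈ range 300, ((peU (i+1) : ℝ) * Real.log (1 + 1/(((i:ℝ)+1) * (((i:ℝ)+1)+2)))) := by
    rw [Finset.mul_sum]
    exact Finset.sum_le_sum hterm
  rw [sum_log_eq 300 peU] at hsum2
  have hlt : ((∏ i ∈ Finset.range 300, ((i+2)^2)^(peU (i+1)) : ℕ) : ℝ)
      / ((∏ i ∈ Finset.range 300, ((i+1)*(i+3))^(peU (i+1)) : ℕ) : ℝ) < (27/10 : ℝ)^(16:ℕ) := by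
    rw [div_lt_iff₀ (by exact_mod_cast hBu)]
    have : ((27/10 : ℝ))^(16:ℕ) = ((3^16 * 9^16 : ℕ) : ℝ) / ((10^16 : ℕ) : ℝ) := by norm_num
    rw [this, div_mul_eq_mul_div, lt_div_iff₀ (by norm_num)]
    rw [show (((∏ i ∈ Finset.range 300, ((i+2)^2)^(peU (i+1)) : ℕ)) : ℝ) * ((10^16 : ℕ) : ℝ)
        = (((∏ i ∈ Finset.range 300, ((i+2)^2)^(peU (i+1))) * 10^16 : ℕ) : ℝ) from by push_cast; ring]
    rw [show (((3^16 * 9^16 : ℕ)) : ℝ) * (((∏ i ∈ Finset.range 300, ((i+1)*(i+3))^(peU (i+1))) : ℕ) : ℝ)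
        = ((3^16 * 9^16 * (∏ i ∈ Finset.range 300, ((i+1)*(i+3))^(peU (i+1))) : ℕ) : ℝ) from by push_cast; ring]
    exact_mod_cast nat_prod_up
  have hABpos : (0:ℝ) < ((∏ i ∈ Finset.range 300, ((i+2)^2)^(peU (i+1)) : ℕ) : ℝ)
      / ((∏ i ∈ Finset.range 300, ((i+1)*(i+3))^(peU (i+1)) : ℕ) : ℝ) := by
    apply div_pos
    · exact_mod_cast hAu
    · exact_mod_cast hBu
  have hloglt := Real.log_lt_log hABpos hlt
  rw [Real.log_pow, show ((16:ℕ):ℝ) = (16:ℝ) from by norm_num] at hloglt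
  have htail : (∑' n : ℕ, bfun (n + 300)) ≤ Real.log (10/9) := by
    have h1 := tail_bound
    have h2 : Real.log ((9:ℝ)/10) ≤ 9/10 - 1 := Real.log_le_sub_one_of_pos (by norm_num)
    have h3 : Real.log ((10:ℝ)/9) = - Real.log ((9:ℝ)/10) := by
      rw [show ((10:ℝ)/9) = ((9:ℝ)/10)⁻¹ from by norm_num, Real.log_inv]
    nlinarith
  have hfinal : Real.log (27/10) + Real.log (10/9) = Real.log 3 := by
    rw [← Real.log_mul (by norm_num) (by norm_num)]
    norm_num
  linarith

theorem khinchin_constant_between_two_and_three :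
    2 < ∏' m : ℕ+, (1 + 1 / ((m : ℝ) * ((m : ℝ) + 2))) ^ Real.logb 2 (m : ℝ) ∧
    (∏' m : ℕ+, (1 + 1 / ((m : ℝ) * ((m : ℝ) + 2))) ^ Real.logb 2 (m : ℝ)) < 3 := by
  set a : ℕ+ → ℝ := fun m => Real.log (1 + 1 / ((m : ℝ) * ((m : ℝ) + 2))) * Real.logb 2 (m : ℝ) with ha
  have hae : ∀ n : ℕ, a (Equiv.pnatEquivNat.symm n) = bfun n := by
    intro n
    have hcoe : ((Equiv.pnatEquivNat.symm n : ℕ+) : ℝ) = (n:ℝ)+1 := by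
      simp [Equiv.pnatEquivNat, Nat.succPNat]
    simp only [ha, bfun, hcoe]
  have hsa : Summable a := by
    rw [← Equiv.summable_iff (Equiv.pnatEquivNat.symm)]
    exact summable_bfun.congr fun n => (hae n).symm
  have hts : ∑' m : ℕ+, a m = ∑' n : ℕ, bfun n := by
    rw [← Equiv.tsum_eq (Equiv.pnatEquivNat.symm) a]
    exact tsum_congr hae
  have hfe : ∀ m : ℕ+, (1 + 1 / ((m : ℝ) * ((m : ℝ) + 2))) ^ Real.logb 2 (m : ℝ) = Real.exp (a m) := by
    intro m
    rw [Real.rpow_def_of_pos]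
    have hm : (0:ℝ) < (m:ℝ) := by exact_mod_cast m.pos
    positivity
  have hhs : HasSum a (∑' n : ℕ, bfun n) := by
    rw [← hts]; exact hsa.hasSum
  have hprod : HasProd (fun m : ℕ+ => (1 + 1 / ((m : ℝ) * ((m : ℝ) + 2))) ^ Real.logb 2 (m : ℝ))
      (Real.exp (∑' n : ℕ, bfun n)) := by
    have h2 : Tendsto (fun s : Finset ℕ+ => Real.exp (∑ m ∈ s, a m)) atTop
        (nhds (Real.exp (∑' n : ℕ, bfun n))) :=
      (Real.continuous_exp.continuousAt).tendsto.comp hhs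
    apply h2.congr
    intro s
    rw [Real.exp_sum]
    exact Finset.prod_congr rfl fun m _ => (hfe m).symm
  have htp : (∏' m : ℕ+, (1 + 1 / ((m : ℝ) * ((m : ℝ) + 2))) ^ Real.logb 2 (m : ℝ))
      = Real.exp (∑' n : ℕ, bfun n) := hprod.tprod_eq
  rw [htp]
  constructor
  · have := Real.exp_lt_exp.mpr S_lower
    rwa [Real.exp_log (by norm_num)] at this
  · have := Real.exp_lt_exp.mpr S_upper
    rwa [Real.exp_log (by norm_num)] at this
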